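/- arXiv:math/0601579 — 2 statements merged into one kernel-verified Lean document; each statement's English description precedes it below -/
import Mathlib

section
/- Let S be a semigroup, a ∈ S with a = βα, α,β ∈ S¹, and let (S,M) be a representation. The induced representation (S_a, M; α, β) (given by m ∗ s = m·(αsβ)) is cyclic if and only if (S,M) is cyclic, M·β = M, and M·α contains a generating element for (S,M). -/
/-- Any product `x * ↑s * y` in `S¹ = WithOne S` with middle factor in `S` lies in `S`. -/
theorem exists_coe_eq {S : Type*} [Semigroup S] (x y : WithOne S) (s : S) :
    ∃ z : S, (z : WithOne S) = x * ↑s * y := by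
  induction x using WithOne.recOneCoe with
  | one => induction y using WithOne.recOneCoe with
    | one => exact ⟨s, by simp⟩
    | coe b => exact ⟨s * b, by simp⟩
  | coe a => induction y using WithOne.recOneCoe with
    | one => exact ⟨a * s, by simp⟩
    | coe b => exact ⟨a * s * b, by simp [mul_assoc]⟩

/-- The element `x s y ∈ S` for `x, y ∈ S¹`, `s ∈ S`. -/
noncomputable def sand3 {S : Type*} [Semigroup S] (x : WithOne S) (s : S) (y : WithOne S) : S :=
  (exists_coe_eq x y s).choose

theorem sand3_spec {S : Type*} [Semigroup S] (x : WithOne S) (s : S) (y : WithOne S) :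
    (↑(sand3 x s y) : WithOne S) = x * ↑s * y :=
  (exists_coe_eq x y s).choose_spec

/-- `sand b c s = b s c ∈ S` for `b, c ∈ S¹`, `s ∈ S`. -/
noncomputable def sand {S : Type*} [Semigroup S] (b c : WithOne S) (s : S) : S := sand3 b s c

/-- The canonical extension of a map `M → S → M` to `S¹ = WithOne S` (with `1` acting as the
identity map), used to express `M · α` for `α ∈ S¹`. -/
def actW {S M : Type*} [Semigroup S] (act : M → S → M) (m : M) : WithOne S → M :=
  WithOne.recOneCoe m (act m)

theorem actW_coe {S M : Type*} [Semigroup S] (act : M → S → M) (m : M) (s : S) :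
    actW act m (↑s : WithOne S) = act m s := rfl

theorem actW_one {S M : Type*} [Semigroup S] (act : M → S → M) (m : M) :
    actW act m (1 : WithOne S) = m := rfl

theorem actW_mul {S M : Type*} [Semigroup S] (act : M → S → M)
    (hact : ∀ (m : M) (s t : S), act m (s * t) = act (act m s) t)
    (m : M) (x y : WithOne S) : actW act m (x * y) = actW act (actW act m x) y := by
  induction x using WithOne.recOneCoe with
  | one => rw [one_mul, actW_one]
  | coe a => induction y using WithOne.recOneCoe with
    | one => rw [mul_one, actW_one]
    | coe b => rw [← WithOne.coe_mul, actW_coe, actW_coe, actW_coe, hact]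

theorem act_sand {S M : Type*} [Semigroup S] (act : M → S → M)
    (hact : ∀ (m : M) (s t : S), act m (s * t) = act (act m s) t)
    (m : M) (α β : WithOne S) (s : S) :
    act m (sand α β s) = actW act (act (actW act m α) s) β := by
  rw [← actW_coe act m (sand α β s), sand, sand3_spec, actW_mul act hact,
    actW_mul act hact, actW_coe]

/-- The induced representation `(S_a, M; α, β)` (given by `m ∗ s = m · (α s β)`) is cyclic iff
`(S, M)` is cyclic, `M · β = M`, and `M · α` contains a generating element for `(S, M)`. -/
theorem induced_cyclic_iff {S M : Type*} [Semigroup S]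
    (act : M → S → M) (hact : ∀ (m : M) (s t : S), act m (s * t) = act (act m s) t)
    (a : S) (α β : WithOne S) (hβα : β * α = (a : WithOne S)) :
    (∃ m : M, ∀ m₁ : M, ∃ s : S, act m (sand α β s) = m₁) ↔
      ((∃ m : M, ∀ m₁ : M, ∃ s : S, act m s = m₁) ∧
        (∀ m₁ : M, ∃ m : M, actW act m β = m₁) ∧
        (∃ m₀ : M, (∃ m : M, actW act m α = m₀) ∧ ∀ m₁ : M, ∃ s : S, act m₀ s = m₁)) := by
  constructor
  · rintro ⟨m, hm⟩
    refine ⟨⟨m, fun m₁ => ?_⟩, fun m₁ => ?_, actW act m α, ⟨m, rfl⟩, fun m₁ => ?_⟩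
    · obtain ⟨s, hs⟩ := hm m₁
      exact ⟨sand α β s, hs⟩
    · obtain ⟨s, hs⟩ := hm m₁
      rw [act_sand act hact] at hs
      exact ⟨act (actW act m α) s, hs⟩
    · obtain ⟨s, hs⟩ := hm m₁
      rw [act_sand act hact] at hs
      refine ⟨sand3 1 s β, ?_⟩
      rw [← actW_coe act _ (sand3 1 s β), sand3_spec, one_mul, actW_mul act hact, actW_coe]
      exact hs
  · rintro ⟨-, hβ, m₀, ⟨m, hm⟩, hgen⟩
    refine ⟨m, fun m₁ => ?_⟩
    obtain ⟨m₂, hm₂⟩ := hβ m₁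
    obtain ⟨s, hs⟩ := hgen m₂
    exact ⟨s, by rw [act_sand act hact, hm, hs, hm₂]⟩
end

section
/- Let S be a semigroup, b,c ∈ S¹, and ρ, σ congruences on S with bσ left cancellable and cσ right cancellable in (S/σ)¹. Then ρ ⊆ σ if and only if ρ_{b,c} ⊆ σ_{b,c}. -/
lemma sand_coe_eq {S : Type*} [Semigroup S] (b c : WithOne S) (s : S) :
    (↑(sand b c s) : WithOne S) = b * ↑s * c := sand3_spec b s c

lemma sand_eq_of_coe {S : Type*} [Semigroup S] (b c : WithOne S) (s u : S)
    (h : (↑u : WithOne S) = b * ↑s * c) : sand b c s = u :=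
  WithOne.coe_inj.mp ((sand_coe_eq b c s).trans h.symm)

lemma sand_one_one {S : Type*} [Semigroup S] (s : S) : sand (1 : WithOne S) 1 s = s :=
  sand_eq_of_coe _ _ _ _ (by simp)

lemma sand_coe_one {S : Type*} [Semigroup S] (a s : S) : sand (↑a) (1 : WithOne S) s = a * s :=
  sand_eq_of_coe _ _ _ _ (by simp)

lemma sand_one_coe {S : Type*} [Semigroup S] (d s : S) : sand (1 : WithOne S) (↑d) s = s * d :=
  sand_eq_of_coe _ _ _ _ (by simp)

lemma sand_coe_coe {S : Type*} [Semigroup S] (a d s : S) : sand (↑a) (↑d) s = a * s * d :=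
  sand_eq_of_coe _ _ _ _ (by simp)

lemma sand_split {S : Type*} [Semigroup S] (b c : WithOne S) (s : S) :
    sand b c s = sand b 1 (sand 1 c s) := by
  symm
  apply sand_eq_of_coe
  rw [sand_coe_eq, sand_coe_eq]
  simp [mul_assoc]

lemma sand_compat {S : Type*} [Semigroup S] (b c : WithOne S) (ρ : S → S → Prop)
    (hρequiv : Equivalence ρ)
    (hρcomp : ∀ s t u v : S, ρ s t → ρ u v → ρ (s * u) (t * v))
    (s t : S) (h : ρ s t) : ρ (sand b c s) (sand b c t) := by
  induction b using WithOne.recOneCoe with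
  | one => induction c using WithOne.recOneCoe with
    | one => rwa [sand_one_one, sand_one_one]
    | coe d => rw [sand_one_coe, sand_one_coe]; exact hρcomp _ _ _ _ h (hρequiv.refl d)
  | coe a => induction c using WithOne.recOneCoe with
    | one => rw [sand_coe_one, sand_coe_one]; exact hρcomp _ _ _ _ (hρequiv.refl a) h
    | coe d =>
      rw [sand_coe_coe, sand_coe_coe]
      exact hρcomp _ _ _ _ (hρcomp _ _ _ _ (hρequiv.refl a) h) (hρequiv.refl d)

/-- If `bσ` and `cσ` are left and right cancellable in `(S/σ)¹`, then for congruences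
`ρ, σ` on `S`: `ρ ⊆ σ` iff `ρ_{b,c} ⊆ σ_{b,c}`. -/
theorem rho_subset_sigma_iff {S : Type*} [Semigroup S]
    (b c : WithOne S) (ρ σ : S → S → Prop)
    (hρequiv : Equivalence ρ)
    (hρcomp : ∀ s t u v : S, ρ s t → ρ u v → ρ (s * u) (t * v))
    (hσequiv : Equivalence σ)
    (hσcomp : ∀ s t u v : S, σ s t → σ u v → σ (s * u) (t * v))
    (hlc : ∀ s t : S, σ (sand b 1 s) (sand b 1 t) → σ s t)
    (hrc : ∀ s t : S, σ (sand 1 c s) (sand 1 c t) → σ s t) :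
    (∀ s t : S, ρ s t → σ s t) ↔
      (∀ s t : S, ρ (sand b c s) (sand b c t) → σ (sand b c s) (sand b c t)) := by
  constructor
  · intro H s t h
    exact H _ _ h
  · intro H s t h
    have h1 : σ (sand b c s) (sand b c t) := H s t (sand_compat b c ρ hρequiv hρcomp s t h)
    rw [sand_split b c s, sand_split b c t] at h1
    exact hrc s t (hlc _ _ h1)
end
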